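/- arXiv:2107.13107 — 3 statements merged into one kernel-verified Lean document; each statement's English description precedes it below -/
import Mathlib

section
/- Let Π : Matrix (Fin n) (Fin n) ℝ be idempotent (Π · Π = Π) with Π ≠ 0 and Π ≠ I. Then ‖I − Π‖₂ = ‖Π‖₂, i.e., a nontrivial oblique projector and its complementary projector have equal spectral norm. -/
open Matrix

lemma kato_aux {E : Type*} [NormedAddCommGroup E] [InnerProductSpace ℝ E]
    (f : E →L[ℝ] E) (hf : ∀ x, f (f x) = f x) (h0 : f ≠ 0) :
    ‖ContinuousLinearMap.id ℝ E - f‖ ≤ ‖f‖ := by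
  set N := ‖f‖ with hNdef
  have hN1 : 1 ≤ N := by
    obtain ⟨v, hv⟩ : ∃ v, f v ≠ 0 := by
      by_contra h
      push_neg at h
      exact h0 (ContinuousLinearMap.ext fun x => by simp [h x])
    have h1 : ‖f (f v)‖ ≤ N * ‖f v‖ := f.le_opNorm (f v)
    rw [hf v] at h1
    have hv' : 0 < ‖f v‖ := norm_pos_iff.mpr hv
    nlinarith
  have hN0 : 0 < N := by linarith
  apply ContinuousLinearMap.opNorm_le_bound _ (le_trans zero_le_one hN1)
  intro x
  simp only [ContinuousLinearMap.sub_apply, ContinuousLinearMap.id_apply]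
  set y := x - f x with hy
  set a := ‖f x‖ with ha
  set b := ‖y‖ with hb
  have hfy : f y = 0 := by simp [hy, map_sub, hf x]
  by_cases hb0 : b = 0
  · rw [hb0]; positivity
  have hbpos : 0 < b := lt_of_le_of_ne (norm_nonneg _) (Ne.symm hb0)
  set s : ℝ := inner ℝ (f x) y with hs
  have key : N^2 * s^2 ≤ (N^2 - 1) * (a^2 * b^2) := by
    set t : ℝ := -s / b^2 with ht
    have h1 : f (f x + t • y) = f x := by
      simp [map_add, _root_.map_smul, hfy, hf x]
    have h2 : a ≤ N * ‖f x + t • y‖ := by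
      have := f.le_opNorm (f x + t • y)
      rw [h1] at this; exact this
    have h3 : ‖f x + t • y‖^2 = a^2 + 2 * (t * s) + t^2 * b^2 := by
      rw [@norm_add_sq_real, real_inner_smul_right, norm_smul]
      rw [Real.norm_eq_abs]
      ring_nf
      rw [sq_abs]
      ring
    have h4 : a^2 ≤ N^2 * ‖f x + t • y‖^2 := by
      have := pow_le_pow_left₀ (norm_nonneg (f x)) h2 2
      rwa [mul_pow] at this
    rw [h3] at h4
    have h5 : a^2 + 2*(t*s) + t^2*b^2 = a^2 - s^2/b^2 := by
      rw [ht]; field_simp; ring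
    rw [h5] at h4
    have h6 : a^2 * b^2 ≤ N^2 * (a^2 - s^2/b^2) * b^2 :=
      mul_le_mul_of_nonneg_right h4 (sq_nonneg b)
    have h7 : N^2 * (a^2 - s^2/b^2) * b^2 = N^2*a^2*b^2 - N^2*s^2 := by
      field_simp
    rw [h7] at h6
    nlinarith
  have hx2 : ‖x‖^2 = a^2 + 2*s + b^2 := by
    have hxe : x = f x + y := by simp [hy]
    rw [hxe, @norm_add_sq_real]
  have key4 : 4*N^2*(N^2*s^2) ≤ 4*N^2*((N^2 - 1)*(a^2*b^2)) :=
    mul_le_mul_of_nonneg_left key (by positivity)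
  have hT1 : (0:ℝ) ≤ N^2*a^2 := by positivity
  have hT2 : (0:ℝ) ≤ (N^2-1)*b^2 := mul_nonneg (by nlinarith) (sq_nonneg b)
  have final : b^2 ≤ N^2 * ‖x‖^2 := by
    rw [hx2]
    nlinarith [sq_nonneg (N^2*a^2 - (N^2-1)*b^2), key4, hT1, hT2,
      sq_nonneg (N^2*a^2 + (N^2-1)*b^2 + 2*N^2*s)]
  calc b = Real.sqrt (b^2) := by rw [Real.sqrt_sq hbpos.le]
    _ ≤ Real.sqrt (N^2 * ‖x‖^2) := Real.sqrt_le_sqrt final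
    _ = N * ‖x‖ := by
        rw [Real.sqrt_mul (by positivity), Real.sqrt_sq hN0.le, Real.sqrt_sq (norm_nonneg x)]

/-- The spectral norm of a matrix: the operator norm of the induced linear map
from `ℓ²` to `ℓ²`, i.e. the largest singular value. -/
noncomputable def matrixSpectralNorm {m n : ℕ} (A : Matrix (Fin m) (Fin n) ℝ) : ℝ :=
  ‖LinearMap.toContinuousLinearMap (Matrix.toEuclideanLin A)‖

/-- A nontrivial idempotent (oblique projector) and its complementary projector
have equal spectral norm. -/
theorem spectralNorm_one_sub_projector {n : ℕ}
    (P : Matrix (Fin n) (Fin n) ℝ)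
    (hidem : P * P = P) (h0 : P ≠ 0) (h1 : P ≠ 1) :
    matrixSpectralNorm ((1 : Matrix (Fin n) (Fin n) ℝ) - P) = matrixSpectralNorm P := by
  set F := LinearMap.toContinuousLinearMap (Matrix.toEuclideanLin P) with hF
  set G := LinearMap.toContinuousLinearMap
    (Matrix.toEuclideanLin ((1 : Matrix (Fin n) (Fin n) ℝ) - P)) with hG
  have happF : ∀ x, F x = Matrix.toEuclideanLin P x := fun x => rfl
  have happG : ∀ x, G x = Matrix.toEuclideanLin (1 - P) x := fun x => rfl
  have hGF : G = ContinuousLinearMap.id ℝ _ - F := by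
    ext x
    simp only [ContinuousLinearMap.sub_apply, ContinuousLinearMap.id_apply, happF, happG]
    simp [Matrix.toEuclideanLin_apply, Matrix.sub_mulVec, Matrix.one_mulVec]
  have hmulF : ∀ x, F (F x) = F x := by
    intro x
    simp only [happF, Matrix.toEuclideanLin_apply]
    have := congrArg (fun M => Matrix.mulVec M ((WithLp.equiv 2 _) x)) hidem
    simpa [Matrix.mulVec_mulVec] using this
  have hmulG : ∀ x, G (G x) = G x := by
    intro x
    have hidemG : (1 - P) * (1 - P) = 1 - P := by
      have h : (1 - P) * (1 - P) = 1 - P - P + P * P := by noncomm_ring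
      rw [h, hidem]; noncomm_ring
    simp only [happG, Matrix.toEuclideanLin_apply]
    have := congrArg (fun M => Matrix.mulVec M ((WithLp.equiv 2 _) x)) hidemG
    simpa [Matrix.mulVec_mulVec] using this
  have hF0 : F ≠ 0 := by
    intro h
    apply h0
    have : Matrix.toEuclideanLin P = 0 := by
      ext1 x
      have := congrArg (fun f : _ →L[ℝ] _ => f x) h
      simpa [happF] using this
    simpa using (map_eq_zero_iff _ (Matrix.toEuclideanLin.injective)).mp this
  have hG0 : G ≠ 0 := by
    intro h
    apply h1
    have : Matrix.toEuclideanLin ((1 : Matrix (Fin n) (Fin n) ℝ) - P) = 0 := by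
      ext1 x
      have := congrArg (fun f : _ →L[ℝ] _ => f x) h
      simpa [happG] using this
    have h2 := (map_eq_zero_iff _ (Matrix.toEuclideanLin.injective)).mp this
    have : (1 : Matrix (Fin n) (Fin n) ℝ) - P = 0 := by simpa using h2
    have := sub_eq_zero.mp this
    exact this.symm
  have hFG : F = ContinuousLinearMap.id ℝ _ - G := by rw [hGF]; abel
  have le1 : ‖G‖ ≤ ‖F‖ := by rw [hGF]; exact kato_aux F hmulF hF0
  have le2 : ‖F‖ ≤ ‖G‖ := by rw [hFG]; exact kato_aux G hmulG hG0
  exact le_antisymm le1 le2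
end

section
/- Let 1 ≤ ℓ ≤ n, let Q : Matrix (Fin n) (Fin ℓ) ℝ have orthonormal columns (Qᵀ Q = I_ℓ), let P : Matrix (Fin n) (Fin ℓ) ℝ be a selection matrix, and assume Pᵀ Q is invertible. Then ‖Q (Pᵀ Q)⁻¹ Pᵀ‖₂ = ‖(Pᵀ Q)⁻¹‖₂. -/
open Matrix

/-- `P` is a selection matrix: its columns are distinct columns of the identity matrix. -/
def IsSelectionMatrix {n ℓ : ℕ} (P : Matrix (Fin n) (Fin ℓ) ℝ) : Prop :=
  ∃ p : Fin ℓ → Fin n, Function.Injective p ∧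
    ∀ i a, P i a = if i = p a then 1 else 0

open scoped Matrix.Norms.L2Operator

lemma spectralNorm_eq_l2 {m n : ℕ} (A : Matrix (Fin m) (Fin n) ℝ) :
    matrixSpectralNorm A = ‖A‖ := (Matrix.l2_opNorm_def A).symm

lemma l2_norm_transpose {m n : ℕ} (A : Matrix (Fin m) (Fin n) ℝ) : ‖Aᵀ‖ = ‖A‖ := by
  rw [← conjTranspose_eq_transpose_of_trivial, Matrix.l2_opNorm_conjTranspose]

lemma l2_norm_orth {n ℓ : ℕ} (hℓ : 1 ≤ ℓ) (A : Matrix (Fin n) (Fin ℓ) ℝ)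
    (hA : Aᵀ * A = 1) : ‖A‖ = 1 := by
  have h1 : ‖(1 : Matrix (Fin ℓ) (Fin ℓ) ℝ)‖ = 1 := by
    haveI : Nontrivial (Matrix (Fin ℓ) (Fin ℓ) ℝ) :=
      ⟨Matrix.of (fun _ _ => (1:ℝ)), 0, fun h => by
        have := congrFun (congrFun h ⟨0, hℓ⟩) ⟨0, hℓ⟩
        exact one_ne_zero this⟩
    exact CStarRing.norm_one
  have h2 : ‖Aᴴ * A‖ = ‖A‖ * ‖A‖ := Matrix.l2_opNorm_conjTranspose_mul_self A
  rw [conjTranspose_eq_transpose_of_trivial, hA, h1] at h2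
  nlinarith [norm_nonneg A]

lemma l2_norm_orth_mul {n ℓ k : ℕ} (hℓ : 1 ≤ ℓ) (A : Matrix (Fin n) (Fin ℓ) ℝ)
    (hA : Aᵀ * A = 1) (B : Matrix (Fin ℓ) (Fin k) ℝ) : ‖A * B‖ = ‖B‖ := by
  have hAn := l2_norm_orth hℓ A hA
  have hle : ‖A * B‖ ≤ ‖B‖ := by
    calc ‖A * B‖ ≤ ‖A‖ * ‖B‖ := Matrix.l2_opNorm_mul A B
    _ = ‖B‖ := by rw [hAn, one_mul]
  have hge : ‖B‖ ≤ ‖A * B‖ := by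
    have : B = Aᵀ * (A * B) := by rw [← Matrix.mul_assoc, hA, Matrix.one_mul]
    calc ‖B‖ = ‖Aᵀ * (A * B)‖ := by rw [← this]
    _ ≤ ‖Aᵀ‖ * ‖A * B‖ := Matrix.l2_opNorm_mul _ _
    _ = ‖A * B‖ := by rw [l2_norm_transpose, hAn, one_mul]
  linarith

/-- For `Q` with orthonormal columns and a selection matrix `P` with `Pᵀ Q` invertible,
`‖Q (Pᵀ Q)⁻¹ Pᵀ‖₂ = ‖(Pᵀ Q)⁻¹‖₂`. -/
theorem spectralNorm_oblique_projector {n ℓ : ℕ} (hℓ : 1 ≤ ℓ) (hℓn : ℓ ≤ n)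
    (Q P : Matrix (Fin n) (Fin ℓ) ℝ)
    (hQ : Qᵀ * Q = (1 : Matrix (Fin ℓ) (Fin ℓ) ℝ))
    (hP : IsSelectionMatrix P)
    (hinv : Invertible (Pᵀ * Q)) :
    matrixSpectralNorm (Q * (Pᵀ * Q)⁻¹ * Pᵀ) = matrixSpectralNorm ((Pᵀ * Q)⁻¹) := by
  obtain ⟨p, hpinj, hPdef⟩ := hP
  have hPP : Pᵀ * P = (1 : Matrix (Fin ℓ) (Fin ℓ) ℝ) := by
    ext a b
    simp only [Matrix.mul_apply, Matrix.transpose_apply, hPdef, Matrix.one_apply]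
    rcases eq_or_ne a b with rfl | hab
    · simp
    · rw [Finset.sum_eq_zero, if_neg hab]
      intro i _
      rcases eq_or_ne i (p a) with rfl | hia
      · rw [if_pos rfl, one_mul, if_neg fun h => hab (hpinj h)]
      · rw [if_neg hia, zero_mul]
  set M := (Pᵀ * Q)⁻¹
  rw [spectralNorm_eq_l2, spectralNorm_eq_l2, Matrix.mul_assoc,
    l2_norm_orth_mul hℓ Q hQ, ← l2_norm_transpose, Matrix.transpose_mul,
    Matrix.transpose_transpose, l2_norm_orth_mul hℓ P hPP, l2_norm_transpose]
end

section
/- (Structure preservation: the interpolatory Tucker approximation reproduces the selected entries exactly.) Let N ≥ 1 and 1 ≤ ℓ ≤ n, let X : (Fin N → Fin n) → ℝ be an order-N tensor, and for each j = 1, …, N let p_j : Fin ℓ → Fin n be injective and let A_j : Matrix (Fin n) (Fin ℓ) ℝ satisfy A_j (p_j a) b = 1 if a = b and 0 otherwise (i.e., the rows of A_j indexed by the selected indices form the ℓ×ℓ identity). Define the core G : (Fin N → Fin ℓ) → ℝ by G(a) = X(fun j => p_j (a j)), and the approximation X̂ = G ×₁ A₁ ×₂ A₂ ⋯ ×_N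 A_N. Then for every a : Fin N → Fin ℓ, X̂(fun j => p_j (a j)) = X(fun j => p_j (a j)). -/
open Matrix Finset

/-- The full Tucker product `G ×₁ A₁ ×₂ A₂ ⋯ ×_N A_N` of a core tensor
`G : (Fin N → Fin ℓ) → ℝ` with factor matrices `A j : Matrix (Fin n) (Fin ℓ) ℝ`:
`(G ×₁ A₁ ⋯ ×_N A_N)(i) = ∑_a G(a) ∏_j A_j (i j) (a j)`. -/
noncomputable def tuckerProd {N n ℓ : ℕ} (G : (Fin N → Fin ℓ) → ℝ)
    (A : Fin N → Matrix (Fin n) (Fin ℓ) ℝ) : (Fin N → Fin n) → ℝ :=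
  fun i => ∑ a : Fin N → Fin ℓ, G a * ∏ j : Fin N, A j (i j) (a j)

/-- Structure preservation: if the rows of each factor matrix `A_j` indexed by the
selected indices `p_j` form the `ℓ×ℓ` identity, and the core is
`G(a) = X(j ↦ p_j(a j))`, then the Tucker approximation
`X̂ = G ×₁ A₁ ⋯ ×_N A_N` reproduces the selected entries of `X` exactly. -/
theorem tucker_structure_preservation {N n ℓ : ℕ}
    (hN : 1 ≤ N) (hℓ : 1 ≤ ℓ) (hℓn : ℓ ≤ n)
    (X : (Fin N → Fin n) → ℝ)
    (p : Fin N → Fin ℓ → Fin n) (hp : ∀ j, Function.Injective (p j))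
    (A : Fin N → Matrix (Fin n) (Fin ℓ) ℝ)
    (hA : ∀ j a b, A j (p j a) b = if a = b then 1 else 0) :
    ∀ a : Fin N → Fin ℓ,
      tuckerProd (fun b => X (fun j => p j (b j))) A (fun j => p j (a j)) =
        X (fun j => p j (a j)) := by
  intro a
  unfold tuckerProd
  rw [Fintype.sum_eq_single a]
  · simp [hA]
  · intro b hb
    have : ∃ j, b j ≠ a j := by
      by_contra h
      push_neg at h
      exact hb (funext h)
    obtain ⟨j, hj⟩ := this
    have : ∏ j : Fin N, A j (p j (a j)) (b j) = 0 := by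
      apply Finset.prod_eq_zero (Finset.mem_univ j)
      rw [hA]
      simp [Ne.symm hj]
    rw [this, mul_zero]
end
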